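/- arXiv:1503.04548 — 3 statements merged into one kernel-verified Lean document; each statement's English description precedes it below -/
import Mathlib

section
/- Let CRCQ hold at x̄ ∈ Γ. Then for all feasible x near x̄ and all x*, v ∈ ℝⁿ with ⟨∇q_i(x),v⟩ = 0 for every i ∈ E ∪ I⁺, where I⁺ = ∪_{λ∈Λ(x,x*)} I⁺(λ), the quadratic form λ ↦ ⟨v, ∇²⟨λ,q⟩(x)v⟩ is constant on Λ(x,x*); consequently Λ(x,x*;v) = Λ(x,x*). -/
open Metric Set Filter Topology
open scoped RealInnerProductSpace NNReal

noncomputable section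

abbrev En (n : ℕ) : Type := EuclideanSpace ℝ (Fin n)

variable (n l₁ l₂ : ℕ) (q : Fin (l₁ + l₂) → En n → ℝ) (xb : En n) (φ : En n → ℝ)

/-- Feasibility for the constraint system `q i x = 0` (i ∈ E), `q i x ≤ 0` (i ∈ I). -/
def Feas (x : En n) : Prop :=
  ∀ i : Fin (l₁ + l₂), ((i : ℕ) < l₁ → q i x = 0) ∧ (l₁ ≤ (i : ℕ) → q i x ≤ 0)

/-- The feasible (constraint) set Γ. -/
def Gam : Set (En n) := {x | Feas n l₁ l₂ q x}

/-- The normal cone `N_Θ(q(x))` to `Θ = {0}^{l₁} × ℝ^{l₂}_-`, described coordinatewise. -/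
def NTheta (x : En n) : Set (En (l₁ + l₂)) :=
  {lam | ∀ i : Fin (l₁ + l₂), l₁ ≤ (i : ℕ) → 0 ≤ lam i ∧ (q i x ≠ 0 → lam i = 0)}

/-- `∇q(x)*λ = ∑ i λ_i ∇q_i(x)`, as a continuous linear functional. -/
def gradSum (x : En n) (lam : En (l₁ + l₂)) : En n →L[ℝ] ℝ :=
  ∑ i, lam i • fderiv ℝ (q i) x

/-- The set of Lagrange multipliers Λ(x, x*) (with x* represented as a functional ξ). -/
def LamSet (x : En n) (ξ : En n →L[ℝ] ℝ) : Set (En (l₁ + l₂)) :=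
  {lam | lam ∈ NTheta n l₁ l₂ q x ∧ gradSum n l₁ l₂ q x lam = ξ}

/-- The Hessian quadratic/bilinear form `⟨v, ∇²q_i(x) w⟩`. -/
def hessQ (i : Fin (l₁ + l₂)) (x v w : En n) : ℝ :=
  fderiv ℝ (fderiv ℝ (q i)) x v w

/-- `⟨v, ∇²⟨λ,q⟩(x) v⟩`. -/
def quadF (x v : En n) (lam : En (l₁ + l₂)) : ℝ :=
  ∑ i, lam i * hessQ n l₁ l₂ q i x v v

/-- The multiplier set in direction v: maximizers of `λ ↦ ⟨v, ∇²⟨λ,q⟩(x)v⟩` over Λ(x,ξ). -/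
def LamDir (x : En n) (ξ : En n →L[ℝ] ℝ) (v : En n) : Set (En (l₁ + l₂)) :=
  {lam | lam ∈ LamSet n l₁ l₂ q x ξ ∧
    ∀ μ ∈ LamSet n l₁ l₂ q x ξ, quadF n l₁ l₂ q x v μ ≤ quadF n l₁ l₂ q x v lam}

/-- The regular (Fréchet) normal cone to Γ at x, as the polar of the contingent cone. -/
def NhatF (x : En n) : Set (En n →L[ℝ] ℝ) :=
  {ξ | ∀ u ∈ tangentConeAt ℝ (Gam n l₁ l₂ q) x, ξ u ≤ 0}

/-- The limiting (Mordukhovich) normal cone to Γ at x. -/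
def Nlim (x : En n) : Set (En n →L[ℝ] ℝ) :=
  {ξ | ∃ xs : ℕ → En n, ∃ ξs : ℕ → (En n →L[ℝ] ℝ),
    (∀ k, xs k ∈ Gam n l₁ l₂ q ∧ ξs k ∈ NhatF n l₁ l₂ q (xs k)) ∧
    Tendsto xs atTop (𝓝 x) ∧ Tendsto ξs atTop (𝓝 ξ)}

/-- The critical cone `K(x, x*) = T_Γ(x) ∩ {x*}⊥`. -/
def Kcone (x : En n) (ξ : En n →L[ℝ] ℝ) : Set (En n) :=
  tangentConeAt ℝ (Gam n l₁ l₂ q) x ∩ {v | ξ v = 0}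

/-- MSCQ: metric subregularity of `x ↦ q(x) − Θ` at `(x̄, 0)`, in residual form. -/
def MSCQ : Prop :=
  ∃ κ > (0 : ℝ), ∃ U ∈ 𝓝 xb, ∀ x ∈ U,
    Metric.infDist x (Gam n l₁ l₂ q) ≤
      κ * ((∑ i ∈ Finset.univ.filter (fun i : Fin (l₁ + l₂) => (i : ℕ) < l₁), |q i x|) +
        ∑ i ∈ Finset.univ.filter (fun i : Fin (l₁ + l₂) => l₁ ≤ (i : ℕ)), max (q i x) 0)

/-- MFCQ at x̄. -/
def MFCQ : Prop :=
  LinearIndependent ℝ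
      (fun i : {i : Fin (l₁ + l₂) // (i : ℕ) < l₁} => fderiv ℝ (q i.1) xb) ∧
  ∃ u : En n, (∀ i : Fin (l₁ + l₂), (i : ℕ) < l₁ → fderiv ℝ (q i) xb u = 0) ∧
    (∀ i : Fin (l₁ + l₂), l₁ ≤ (i : ℕ) → q i xb = 0 → fderiv ℝ (q i) xb u < 0)

/-- BEPP at x̄: linear independence of equality gradients plus a uniform bound on
extreme points of the multiplier sets near x̄. -/
def BEPP : Prop :=
  LinearIndependent ℝ
      (fun i : {i : Fin (l₁ + l₂) // (i : ℕ) < l₁} => fderiv ℝ (q i.1) xb) ∧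
  ∃ U ∈ 𝓝 xb, ∃ κ > (0 : ℝ), ∀ x ∈ U, x ∈ Gam n l₁ l₂ q →
    ∀ ξ : En n →L[ℝ] ℝ, ∀ lam ∈ Set.extremePoints ℝ (LamSet n l₁ l₂ q x ξ),
      ‖lam‖ ≤ κ * ‖ξ‖

/-- Active constraint indices at x̄ (all equality indices and active inequality indices). -/
def ActiveIdx : Set (Fin (l₁ + l₂)) := {i | (i : ℕ) < l₁ ∨ q i xb = 0}

/-- Rank of the gradient family `{∇q_i(x) | i ∈ A}`. -/
def rankA (x : En n) (A : Finset (Fin (l₁ + l₂))) : ℕ :=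
  Module.finrank ℝ
    ↥(Submodule.span ℝ ((fun i => fderiv ℝ (q i) x) '' (↑A : Set (Fin (l₁ + l₂)))))

/-- CRCQ at x̄. -/
def CRCQ : Prop :=
  ∃ U ∈ 𝓝 xb, ∀ A : Finset (Fin (l₁ + l₂)), ↑A ⊆ ActiveIdx n l₁ l₂ q xb →
    ∀ x ∈ U, rankA n l₁ l₂ q x A = rankA n l₁ l₂ q xb A

/-- The KKT condition at x̄ for minimizing φ over Γ. -/
def KKT : Prop :=
  ∃ lam ∈ NTheta n l₁ l₂ q xb, fderiv ℝ φ xb + gradSum n l₁ l₂ q xb lam = 0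

/-- The set Λ̄_E of extreme multipliers in nonzero critical directions. -/
def LamBarE : Set (En (l₁ + l₂)) :=
  ⋃ v ∈ (Kcone n l₁ l₂ q xb (-(fderiv ℝ φ xb)) \ {0}),
    LamDir n l₁ l₂ q xb (-(fderiv ℝ φ xb)) v ∩
      Set.extremePoints ℝ (LamSet n l₁ l₂ q xb (-(fderiv ℝ φ xb)))

/-- The localized argminimum set M_γ(v*) of the tilted problem. -/
def ArgminSet (γ : ℝ) (v : En n) : Set (En n) :=
  {x | x ∈ Gam n l₁ l₂ q ∧ x ∈ Metric.closedBall xb γ ∧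
    ∀ y, y ∈ Gam n l₁ l₂ q → y ∈ Metric.closedBall xb γ →
      φ x - @inner ℝ _ _ v x ≤ φ y - @inner ℝ _ _ v y}

/-- Tilt-stable local minimizer of φ over Γ with modulus κ. -/
def TiltStableMod (κ : ℝ) : Prop :=
  ∃ γ > (0 : ℝ), ∃ δ > (0 : ℝ), ∃ m : En n → En n, m 0 = xb ∧
    LipschitzOnWith (Real.toNNReal κ) m (Metric.ball (0 : En n) δ) ∧
    ∀ v ∈ Metric.ball (0 : En n) δ, ArgminSet n l₁ l₂ q xb φ γ v = {m v}

/-- Tilt-stable local minimizer (no modulus specified). -/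
def TiltStable : Prop :=
  ∃ K : ℝ≥0, ∃ γ > (0 : ℝ), ∃ δ > (0 : ℝ), ∃ m : En n → En n, m 0 = xb ∧
    LipschitzOnWith K m (Metric.ball (0 : En n) δ) ∧
    ∀ v ∈ Metric.ball (0 : En n) δ, ArgminSet n l₁ l₂ q xb φ γ v = {m v}

end
private lemma hessQ_hasDerivAt {n l₁ l₂ : ℕ} (q : Fin (l₁+l₂) → En n → ℝ)
    (hq : ∀ i, ContDiff ℝ 2 (q i)) (i : Fin (l₁+l₂)) (x v : En n) :
    HasDerivAt (fun t : ℝ => fderiv ℝ (q i) (x + t • v) v) (hessQ n l₁ l₂ q i x v v) 0 := by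
  have hdf : ContDiff ℝ 1 (fderiv ℝ (q i)) := (hq i).fderiv_right (m := 1) (by norm_num)
  have h1 : HasDerivAt (fun t : ℝ => x + t • v) v 0 := by
    simpa using ((hasDerivAt_id (0:ℝ)).smul_const v).const_add x
  have h2 : HasFDerivAt (fderiv ℝ (q i)) (fderiv ℝ (fderiv ℝ (q i)) x)
      ((fun t : ℝ => x + t • v) 0) := by
    simpa using ((hdf.differentiable (by norm_num)) x).hasFDerivAt
  have h3 : HasDerivAt (fun t : ℝ => fderiv ℝ (q i) (x + t • v))
      (fderiv ℝ (fderiv ℝ (q i)) x v) 0 := h2.comp_hasDerivAt 0 h1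
  have h4 := h3.clm_apply (hasDerivAt_const (0:ℝ) v)
  simpa [hessQ] using h4

set_option maxHeartbeats 1600000 in
private lemma key_zero {n l₁ l₂ : ℕ} (q : Fin (l₁+l₂) → En n → ℝ)
    (hq : ∀ i, ContDiff ℝ 2 (q i)) (x v : En n)
    (A B : Finset (Fin (l₁+l₂))) (c : Fin (l₁+l₂) → ℝ)
    (hindep : LinearIndependent ℝ (fun i : ↥B => fderiv ℝ (q ↑i) x))
    (hspan : ∀ᶠ t : ℝ in 𝓝 0,
      (∑ i ∈ A, c i • fderiv ℝ (q i) (x + t • v)) ∈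
        Submodule.span ℝ (Set.range (fun i : ↥B => fderiv ℝ (q ↑i) (x + t • v))))
    (hG0 : ∑ i ∈ A, c i • fderiv ℝ (q i) x = 0)
    (hv : ∀ i ∈ A, fderiv ℝ (q i) x v = 0)
    (hvB : ∀ i ∈ B, fderiv ℝ (q i) x v = 0) :
    ∑ i ∈ A, c i * hessQ n l₁ l₂ q i x v v = 0 := by
  classical
  set g : Fin (l₁+l₂) → ℝ → (En n →L[ℝ] ℝ) := fun i t => fderiv ℝ (q i) (x + t • v) with hg
  set G : ℝ → (En n →L[ℝ] ℝ) := fun t => ∑ i ∈ A, c i • g i t with hGdef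
  set h : ℝ → ℝ := fun t => ∑ i ∈ A, c i * (g i t v) with hhdef
  set S : ℝ := ∑ i ∈ A, c i * hessQ n l₁ l₂ q i x v v with hSdef
  -- derivative of h at 0 is S
  have hder : HasDerivAt h S 0 :=
    HasDerivAt.fun_sum fun i _ => (hessQ_hasDerivAt q hq i x v).const_mul (c i)
  have hzero : x + (0:ℝ) • v = x := by simp
  have h0 : h 0 = 0 := by
    apply Finset.sum_eq_zero
    intro i hi
    simp [hhdef, hg, hzero, hv i hi]
  -- continuity of G, G 0 = 0
  have hgc : ∀ i, Continuous fun t : ℝ => g i t := by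
    intro i
    have : Continuous (fderiv ℝ (q i)) := ((hq i).fderiv_right (m := 1) (by norm_num)).continuous
    exact this.comp (continuous_const.add (continuous_id.smul continuous_const))
  have hGc : Continuous G := continuous_finset_sum _ fun i _ => (continuous_const.fun_smul (hgc i))
  have hG0' : G 0 = 0 := by
    simp only [hGdef, hg, hzero]; exact hG0
  have hGnorm : Tendsto (fun t => ‖G t‖) (𝓝 0) (𝓝 0) := by
    have := (hGc.tendsto 0).norm
    rwa [hG0', norm_zero] at this
  -- antilipschitz
  set w : ↥B → (En n →L[ℝ] ℝ) := fun i => fderiv ℝ (q ↑i) x with hw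
  set Φ : (↥B → ℝ) →ₗ[ℝ] (En n →L[ℝ] ℝ) := ∑ i : ↥B, (LinearMap.proj i).smulRight (w i) with hΦ
  have hΦapp : ∀ e : ↥B → ℝ, Φ e = ∑ i : ↥B, e i • w i := by
    intro e; simp [hΦ, LinearMap.sum_apply]
  have hker : LinearMap.ker Φ = ⊥ := by
    rw [LinearMap.ker_eq_bot']
    intro e he
    funext i
    exact Fintype.linearIndependent_iff.mp hindep e (by rw [← hΦapp]; exact he) i
  obtain ⟨K, hKpos, hKanti⟩ := Φ.exists_antilipschitzWith hker
  have hKest : ∀ e : ↥B → ℝ, ‖e‖ ≤ (K:ℝ) * ‖Φ e‖ := by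
    intro e
    have := hKanti.le_mul_dist e 0
    simpa [dist_eq_norm] using this
  -- delta
  set δ : ℝ → ℝ := fun t => ∑ i : ↥B, ‖g ↑i t - w i‖ with hδ
  have hδc : Continuous δ := by
    apply continuous_finset_sum
    intro i _
    exact ((hgc ↑i).sub continuous_const).norm
  have hδ0 : δ 0 = 0 := by
    apply Finset.sum_eq_zero
    intro i _
    simp [hδ, hg, hw, hzero]
  have hδsmall : ∀ᶠ t : ℝ in 𝓝 0, δ t ≤ 1/(2*(K:ℝ)) := by
    have hpos : (0:ℝ) < 1/(2*(K:ℝ)) := by positivity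
    have := (hδc.tendsto 0)
    rw [hδ0] at this
    exact this.eventually (eventually_le_nhds hpos)
  -- psi bounds
  set C : ℝ := ∑ i : ↥B, (|hessQ n l₁ l₂ q ↑i x v v| + 1) with hC
  have hψ : ∀ᶠ t : ℝ in 𝓝[≠] 0, ∀ i : ↥B,
      |g ↑i t v| ≤ (|hessQ n l₁ l₂ q ↑i x v v| + 1) * |t| := by
    rw [eventually_all]
    intro i
    have hdi := hessQ_hasDerivAt q hq ↑i x v
    have hsl := hasDerivAt_iff_tendsto_slope.mp hdi
    have hψ0 : fderiv ℝ (q ↑i) x v = 0 := hvB ↑i i.2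
    have hev : ∀ᶠ t : ℝ in 𝓝[≠] 0,
        |slope (fun t : ℝ => fderiv ℝ (q i) (x + t • v) v) 0 t|
          ≤ |hessQ n l₁ l₂ q ↑i x v v| + 1 := by
      have : ∀ᶠ y in 𝓝 (hessQ n l₁ l₂ q ↑i x v v), |y| ≤ |hessQ n l₁ l₂ q ↑i x v v| + 1 := by
        have : Continuous fun y : ℝ => |y| := continuous_abs
        refine (this.tendsto _).eventually (eventually_le_nhds ?_)
        linarith
      exact hsl.eventually this
    filter_upwards [hev, self_mem_nhdsWithin] with t ht ht0
    have ht0' : t ≠ 0 := ht0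
    have : slope (fun t : ℝ => fderiv ℝ (q i) (x + t • v) v) 0 t
        = (g ↑i t v) / t := by
      rw [slope_def_field]
      simp [hg, hψ0]
    rw [this, abs_div] at ht
    have habs : (0:ℝ) < |t| := abs_pos.mpr ht0'
    calc |g ↑i t v| = |g ↑i t v| / |t| * |t| := by field_simp
    _ ≤ (|hessQ n l₁ l₂ q ↑i x v v| + 1) * |t| := by
        apply mul_le_mul_of_nonneg_right ht (abs_nonneg t)
  have hCnn : (0:ℝ) ≤ C := Finset.sum_nonneg fun i _ => by positivity
  -- main bound
  have hmain : ∀ᶠ t : ℝ in 𝓝[≠] 0, |h t / t| ≤ 2*(K:ℝ)*C*‖G t‖ := by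
    filter_upwards [hψ, hδsmall.filter_mono nhdsWithin_le_nhds,
      hspan.filter_mono nhdsWithin_le_nhds, self_mem_nhdsWithin] with t hψt hδt hspant ht0
    have ht0' : (t:ℝ) ≠ 0 := ht0
    obtain ⟨d, hd⟩ := (Submodule.mem_span_range_iff_exists_fun ℝ).mp hspant
    have hd' : (∑ i : ↥B, d i • g ↑i t) = G t := hd
    have hdnn : (0:ℝ) ≤ ‖d‖ := norm_nonneg d
    have hΦd_diff : ‖Φ d - G t‖ ≤ ‖d‖ * δ t := by
      rw [← hd', hΦapp, ← Finset.sum_sub_distrib]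
      calc ‖∑ i : ↥B, (d i • w i - d i • g ↑i t)‖
          ≤ ∑ i : ↥B, ‖d i • w i - d i • g ↑i t‖ := norm_sum_le _ _
        _ ≤ ∑ i : ↥B, ‖d‖ * ‖g ↑i t - w i‖ := by
            refine Finset.sum_le_sum fun i _ => ?_
            rw [(smul_sub (d i) (w i) (g ↑i t)).symm, norm_smul, norm_sub_rev]
            exact mul_le_mul_of_nonneg_right (norm_le_pi_norm d i) (norm_nonneg _)
        _ = ‖d‖ * δ t := by rw [hδ, Finset.mul_sum]
    have hΦd : ‖Φ d‖ ≤ ‖G t‖ + ‖d‖ * δ t :=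
      le_trans (norm_le_norm_add_norm_sub' (Φ d) (G t)) (add_le_add_right hΦd_diff _)
    have hδt' : (K:ℝ) * δ t ≤ 1/2 := by
      calc (K:ℝ) * δ t ≤ (K:ℝ) * (1/(2*(K:ℝ))) :=
            mul_le_mul_of_nonneg_left hδt K.coe_nonneg
        _ = 1/2 := by field_simp
    have hdb : ‖d‖ ≤ 2*(K:ℝ)*‖G t‖ := by
      have h3 : ((K:ℝ) * δ t) * ‖d‖ ≤ (1/2) * ‖d‖ := mul_le_mul_of_nonneg_right hδt' hdnn
      have h1' : ‖d‖ ≤ (K:ℝ)*‖G t‖ + ((K:ℝ)*δ t)*‖d‖ := by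
        calc ‖d‖ ≤ (K:ℝ)*‖Φ d‖ := hKest d
          _ ≤ (K:ℝ)*(‖G t‖ + ‖d‖ * δ t) := mul_le_mul_of_nonneg_left hΦd K.coe_nonneg
          _ = (K:ℝ)*‖G t‖ + ((K:ℝ)*δ t)*‖d‖ := by ring
      linarith only [h3, h1']
    have hht : h t = ∑ i : ↥B, d i * (g ↑i t v) := by
      have h1 : h t = G t v := by
        simp only [hhdef, hGdef, ContinuousLinearMap.sum_apply,
          ContinuousLinearMap.smul_apply, smul_eq_mul]
      have h2 : G t v = ∑ i : ↥B, d i * (g ↑i t v) := by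
        rw [← hd']
        simp only [ContinuousLinearMap.sum_apply, ContinuousLinearMap.smul_apply, smul_eq_mul]
      rw [h1, h2]
    have habs : |h t| ≤ ‖d‖ * (C * |t|) := by
      rw [hht]
      calc |∑ i : ↥B, d i * (g ↑i t v)| ≤ ∑ i : ↥B, |d i * (g ↑i t v)| :=
            Finset.abs_sum_le_sum_abs _ _
        _ ≤ ∑ i : ↥B, ‖d‖ * ((|hessQ n l₁ l₂ q ↑i x v v| + 1) * |t|) := by
            refine Finset.sum_le_sum fun i _ => ?_
            rw [abs_mul]
            exact mul_le_mul (norm_le_pi_norm d i) (hψt i) (abs_nonneg _) hdnn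
        _ = ‖d‖ * (C * |t|) := by rw [← Finset.mul_sum, ← Finset.sum_mul]
    rw [abs_div, div_le_iff₀ (abs_pos.mpr ht0')]
    calc |h t| ≤ ‖d‖ * (C * |t|) := habs
      _ ≤ (2*(K:ℝ)*‖G t‖) * (C * |t|) :=
          mul_le_mul_of_nonneg_right hdb (mul_nonneg hCnn (abs_nonneg t))
      _ = 2*(K:ℝ)*C*‖G t‖ * |t| := by ring
  have hlim0 : Tendsto (fun t => h t / t) (𝓝[≠] (0:ℝ)) (𝓝 0) := by
    refine squeeze_zero_norm' (a := fun t => 2*(K:ℝ)*C*‖G t‖) ?_ ?_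
    · filter_upwards [hmain] with t ht using by rwa [Real.norm_eq_abs]
    · have := (hGnorm.const_mul (2*(K:ℝ)*C)).mono_left (nhdsWithin_le_nhds (s := {(0:ℝ)}ᶜ))
      simpa using this
  have hlimS : Tendsto (fun t => h t / t) (𝓝[≠] (0:ℝ)) (𝓝 S) := by
    have hsl := hasDerivAt_iff_tendsto_slope.mp hder
    have heq : slope h 0 = fun t => h t / t := by
      funext t; rw [slope_def_field, h0, sub_zero, sub_zero]
    rwa [heq] at hsl
  exact tendsto_nhds_unique hlimS hlim0


set_option maxHeartbeats 1600000 in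
/-- under CRCQ, for x near x̄ the quadratic form
`λ ↦ ⟨v,∇²⟨λ,q⟩(x)v⟩` is constant on Λ(x,x*) whenever `⟨∇q_i(x),v⟩ = 0` for all
`i ∈ E ∪ I⁺`; consequently Λ(x,x*;v) = Λ(x,x*). -/
theorem stmt12 (n l₁ l₂ : ℕ) (q : Fin (l₁ + l₂) → En n → ℝ) (xb : En n)
    (hq : ∀ i, ContDiff ℝ 2 (q i)) (hfeas : Feas n l₁ l₂ q xb)
    (hcrcq : CRCQ n l₁ l₂ q xb) :
    ∃ U ∈ 𝓝 xb, ∀ x ∈ U, x ∈ Gam n l₁ l₂ q →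
      ∀ ξ : En n →L[ℝ] ℝ, ∀ v : En n,
        (∀ i : Fin (l₁ + l₂),
          ((i : ℕ) < l₁ ∨ ∃ lam ∈ LamSet n l₁ l₂ q x ξ, 0 < lam i) →
          fderiv ℝ (q i) x v = 0) →
        (∀ lam ∈ LamSet n l₁ l₂ q x ξ, ∀ μ ∈ LamSet n l₁ l₂ q x ξ,
          quadF n l₁ l₂ q x v lam = quadF n l₁ l₂ q x v μ) ∧
        LamDir n l₁ l₂ q x ξ v = LamSet n l₁ l₂ q x ξ := by
  classical
  obtain ⟨U₀, hU₀, hrank⟩ := hcrcq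
  set V : Set (En n) := interior U₀ ∩
      ⋂ i : Fin (l₁+l₂), {y | (l₁ ≤ (i:ℕ) ∧ q i xb < 0) → q i y < 0} with hVdef
  have hVopen : IsOpen V := by
    refine isOpen_interior.inter (isOpen_iInter_of_finite fun i => ?_)
    by_cases hcond : l₁ ≤ (i:ℕ) ∧ q i xb < 0
    · have heq : {y : En n | (l₁ ≤ (i:ℕ) ∧ q i xb < 0) → q i y < 0} = {y | q i y < 0} := by
        ext y; simp [hcond]
      rw [heq]
      exact isOpen_lt (hq i).continuous continuous_const
    · have heq : {y : En n | (l₁ ≤ (i:ℕ) ∧ q i xb < 0) → q i y < 0} = Set.univ := by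
        ext y; simp [hcond]
      rw [heq]; exact isOpen_univ
  have hxbV : xb ∈ V :=
    ⟨mem_interior_iff_mem_nhds.mpr hU₀, Set.mem_iInter.mpr fun i hc => hc.2⟩
  refine ⟨V, hVopen.mem_nhds hxbV, ?_⟩
  intro x hxV hxGam ξ v hv
  set A : Finset (Fin (l₁+l₂)) := Finset.univ.filter
    (fun i => (i:ℕ) < l₁ ∨ ∃ lam ∈ LamSet n l₁ l₂ q x ξ, 0 < lam i) with hA
  have hmemA : ∀ i, i ∈ A ↔ ((i:ℕ) < l₁ ∨ ∃ lam ∈ LamSet n l₁ l₂ q x ξ, 0 < lam i) := by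
    intro i; simp [hA]
  have hAactive : ↑A ⊆ ActiveIdx n l₁ l₂ q xb := by
    intro i hi
    rw [Finset.mem_coe, hmemA] at hi
    show (i:ℕ) < l₁ ∨ q i xb = 0
    rcases hi with hi | ⟨lam, hlam, hpos⟩
    · exact Or.inl hi
    · by_cases hl : (i:ℕ) < l₁
      · exact Or.inl hl
      · have hl' : l₁ ≤ (i:ℕ) := le_of_not_gt hl
        have hqx : q i x = 0 := by
          by_contra hne
          rw [(hlam.1 i hl').2 hne] at hpos
          exact lt_irrefl 0 hpos
        right
        by_contra hne
        have hlt : q i xb < 0 := lt_of_le_of_ne ((hfeas i).2 hl') hne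
        have hx2 := Set.mem_iInter.mp hxV.2 i ⟨hl', hlt⟩
        rw [hqx] at hx2
        exact lt_irrefl 0 hx2
  obtain ⟨I, hIindep, hImax⟩ :=
    exists_maximal_linearIndepOn ℝ (fun j : {i // i ∈ A} => fderiv ℝ (q ↑j) x)
  set B : Finset (Fin (l₁+l₂)) :=
    Finset.image (fun j : {i // i ∈ A} => (j : Fin (l₁+l₂))) (Set.toFinite I).toFinset with hB
  have hmemB : ∀ i, i ∈ B ↔ ∃ (h : i ∈ A), (⟨i, h⟩ : {i // i ∈ A}) ∈ I := by
    intro i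
    simp only [hB, Finset.mem_image, Set.Finite.mem_toFinset]
    constructor
    · rintro ⟨j, hj, rfl⟩
      exact ⟨j.2, by rwa [Subtype.coe_eta]⟩
    · rintro ⟨h, hI⟩
      exact ⟨⟨i, h⟩, hI, rfl⟩
  have hBA : B ⊆ A := by
    intro i hi
    obtain ⟨h, _⟩ := (hmemB i).mp hi
    exact h
  have hindepB : LinearIndependent ℝ (fun i : ↥B => fderiv ℝ (q ↑i) x) := by
    set e : ↥B → ↥I := fun i =>
      ⟨⟨(i : Fin (l₁+l₂)), ((hmemB ↑i).mp i.2).choose⟩, ((hmemB ↑i).mp i.2).choose_spec⟩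
      with he
    have hinj : Function.Injective e := by
      intro a b hab
      have : (↑a : Fin (l₁+l₂)) = ↑b := congrArg (fun z : ↥I => ((z : {i // i ∈ A}) : Fin (l₁+l₂))) hab
      exact Subtype.ext this
    exact LinearIndependent.comp hIindep e hinj
  have hspanx : Submodule.span ℝ ((fun i => fderiv ℝ (q i) x) '' ↑A)
      = Submodule.span ℝ ((fun i => fderiv ℝ (q i) x) '' ↑B) := by
    apply le_antisymm
    · rw [Submodule.span_le]
      rintro _ ⟨i, hiA, rfl⟩
      rw [Finset.mem_coe] at hiA
      by_cases hiI : (⟨i, hiA⟩ : {i // i ∈ A}) ∈ I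
      · exact Submodule.subset_span ⟨i, Finset.mem_coe.mpr ((hmemB i).mpr ⟨hiA, hiI⟩), rfl⟩
      · obtain ⟨a, ha0, hmem⟩ := hImax ⟨i, hiA⟩ hiI
        have himg : (fun j : {i // i ∈ A} => fderiv ℝ (q ↑j) x) '' I
            ⊆ (fun i => fderiv ℝ (q i) x) '' ↑B := by
          rintro _ ⟨j, hj, rfl⟩
          exact ⟨↑j, Finset.mem_coe.mpr ((hmemB ↑j).mpr ⟨j.2, by rwa [Subtype.coe_eta]⟩), rfl⟩
        have hmem' : a • fderiv ℝ (q i) x ∈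
            Submodule.span ℝ ((fun i => fderiv ℝ (q i) x) '' ↑B) :=
          Submodule.span_mono himg hmem
        have h2 := Submodule.smul_mem
          (Submodule.span ℝ ((fun i => fderiv ℝ (q i) x) '' ↑B)) a⁻¹ hmem'
        rwa [smul_smul, inv_mul_cancel₀ ha0, one_smul] at h2
    · exact Submodule.span_mono (Set.image_mono (Finset.coe_subset.mpr hBA))
  have hBactive : ↑B ⊆ ActiveIdx n l₁ l₂ q xb :=
    fun i hi => hAactive (Finset.coe_subset.mpr hBA hi)
  have hxU : x ∈ U₀ := interior_subset hxV.1
  have hspan_y : ∀ y ∈ V, Submodule.span ℝ ((fun i => fderiv ℝ (q i) y) '' ↑A)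
      = Submodule.span ℝ ((fun i => fderiv ℝ (q i) y) '' ↑B) := by
    intro y hyV
    have hyU : y ∈ U₀ := interior_subset hyV.1
    have h1 : rankA n l₁ l₂ q y A = rankA n l₁ l₂ q x A := by
      rw [hrank A hAactive y hyU, hrank A hAactive x hxU]
    have h2 : rankA n l₁ l₂ q y B = rankA n l₁ l₂ q x B := by
      rw [hrank B hBactive y hyU, hrank B hBactive x hxU]
    have h3 : rankA n l₁ l₂ q x A = rankA n l₁ l₂ q x B := by
      simp only [rankA]
      rw [hspanx]
    have hle : Submodule.span ℝ ((fun i => fderiv ℝ (q i) y) '' ↑B)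
        ≤ Submodule.span ℝ ((fun i => fderiv ℝ (q i) y) '' ↑A) :=
      Submodule.span_mono (Set.image_mono (Finset.coe_subset.mpr hBA))
    have hfr : rankA n l₁ l₂ q y B = rankA n l₁ l₂ q y A := by
      rw [h1, h2, h3]
    exact (Submodule.eq_of_le_of_finrank_eq hle hfr).symm
  have hconst : ∀ lam ∈ LamSet n l₁ l₂ q x ξ, ∀ μ ∈ LamSet n l₁ l₂ q x ξ,
      quadF n l₁ l₂ q x v lam = quadF n l₁ l₂ q x v μ := by
    intro lam hlam μ hμ
    set c : Fin (l₁+l₂) → ℝ := fun i => lam i - μ i with hc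
    have hczero : ∀ i ∉ A, lam i = μ i := by
      intro i hi
      rw [hmemA] at hi
      push_neg at hi
      obtain ⟨hl, hall⟩ := hi
      have hl' : l₁ ≤ (i:ℕ) := hl
      have h1 : lam i = 0 :=
        le_antisymm (hall lam hlam) (hlam.1 i hl').1
      have h2 : μ i = 0 :=
        le_antisymm (hall μ hμ) (hμ.1 i hl').1
      rw [h1, h2]
    have hG0 : ∑ i ∈ A, c i • fderiv ℝ (q i) x = 0 := by
      have huniv : ∑ i ∈ Finset.univ, c i • fderiv ℝ (q i) x = 0 := by
        have h1 : ∑ i ∈ Finset.univ, c i • fderiv ℝ (q i) x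
            = gradSum n l₁ l₂ q x lam - gradSum n l₁ l₂ q x μ := by
          rw [gradSum, gradSum, ← Finset.sum_sub_distrib]
          exact Finset.sum_congr rfl fun i _ => by rw [hc, sub_smul]
        rw [h1, hlam.2, hμ.2, sub_self]
      calc ∑ i ∈ A, c i • fderiv ℝ (q i) x
          = ∑ i ∈ Finset.univ, c i • fderiv ℝ (q i) x :=
            Finset.sum_subset (Finset.subset_univ A)
              (fun i _ hi => by simp [hc, hczero i hi])
        _ = 0 := huniv
    have hvA : ∀ i ∈ A, fderiv ℝ (q i) x v = 0 := fun i hi => hv i ((hmemA i).mp hi)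
    have hvB : ∀ i ∈ B, fderiv ℝ (q i) x v = 0 := fun i hi => hvA i (hBA hi)
    have hev : ∀ᶠ t : ℝ in 𝓝 (0:ℝ), x + t • v ∈ V := by
      have hcont : Tendsto (fun t : ℝ => x + t • v) (𝓝 0) (𝓝 x) := by
        have hc' : Continuous fun t : ℝ => x + t • v :=
          continuous_const.add (continuous_id.smul continuous_const)
        have h0 := hc'.tendsto 0
        simpa using h0
      exact hcont (hVopen.mem_nhds hxV)
    have hspan : ∀ᶠ t : ℝ in 𝓝 (0:ℝ),
        (∑ i ∈ A, c i • fderiv ℝ (q i) (x + t • v)) ∈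
          Submodule.span ℝ (Set.range (fun i : ↥B => fderiv ℝ (q ↑i) (x + t • v))) := by
      filter_upwards [hev] with t ht
      have hmemspan : (∑ i ∈ A, c i • fderiv ℝ (q i) (x + t • v)) ∈
          Submodule.span ℝ ((fun i => fderiv ℝ (q i) (x + t • v)) '' ↑A) :=
        Submodule.sum_mem _ fun i hi => Submodule.smul_mem _ _
          (Submodule.subset_span ⟨i, Finset.mem_coe.mpr hi, rfl⟩)
      rw [hspan_y _ ht, Set.image_eq_range] at hmemspan
      exact hmemspan
    have hkey := key_zero q hq x v A B c hindepB hspan hG0 hvA hvB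
    have hsum : quadF n l₁ l₂ q x v lam - quadF n l₁ l₂ q x v μ
        = ∑ i ∈ A, c i * hessQ n l₁ l₂ q i x v v := by
      calc quadF n l₁ l₂ q x v lam - quadF n l₁ l₂ q x v μ
          = ∑ i ∈ Finset.univ, c i * hessQ n l₁ l₂ q i x v v := by
            rw [quadF, quadF, ← Finset.sum_sub_distrib]
            exact Finset.sum_congr rfl fun i _ => by rw [hc]; ring
        _ = ∑ i ∈ A, c i * hessQ n l₁ l₂ q i x v v :=
            (Finset.sum_subset (Finset.subset_univ A)
              (fun i _ hi => by simp [hc, hczero i hi])).symm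
    have hfin := hsum.trans hkey
    linarith [hfin]
  refine ⟨hconst, ?_⟩
  apply Set.Subset.antisymm
  · intro lam hlam
    exact hlam.1
  · intro lam hlam
    exact ⟨hlam, fun μ hμ => le_of_eq (hconst μ hμ lam hlam)⟩
end

section
/- If MSCQ, BEPP, and the KKT condition hold at x̄ and the critical cone is trivial, K(x̄,−∇φ(x̄)) = {0}, then for all sufficiently small γ > 0 there is a neighborhood V of 0 ∈ ℝⁿ such that argmin{φ(x) + δ_Γ(x) − ⟨v*,x⟩ : x ∈ B_γ(x̄)} = {x̄} for all v* ∈ V; in particular x̄ is a tilt-stable minimizer with exact tilt-stability bound 0. -/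
open Metric Set Filter Topology
open scoped RealInnerProductSpace NNReal

/-- Difference quotient along a sequence converges to the derivative in the limit direction. -/
lemma quot_tendsto {n : ℕ} {f : En n → ℝ} {xb : En n} (hf : DifferentiableAt ℝ f xb)
    {x : ℕ → En n} {u : En n}
    (hxu : Tendsto (fun k => (‖x k - xb‖)⁻¹ • (x k - xb)) atTop (𝓝 u))
    (hxlim : Tendsto x atTop (𝓝 xb)) :
    Tendsto (fun k => (f (x k) - f xb) / ‖x k - xb‖) atTop (𝓝 (fderiv ℝ f xb u)) := by
  set D := fderiv ℝ f xb
  have h1 : (fun k => f (x k) - f xb - D (x k - xb)) =o[atTop] fun k => ‖x k - xb‖ :=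
    (hf.hasFDerivAt.isLittleO.comp_tendsto hxlim).norm_right
  have h2 : Tendsto (fun k => (f (x k) - f xb - D (x k - xb)) / ‖x k - xb‖) atTop (𝓝 0) :=
    h1.tendsto_div_nhds_zero
  have h3 : Tendsto (fun k => D ((‖x k - xb‖)⁻¹ • (x k - xb))) atTop (𝓝 (D u)) :=
    (D.continuous.tendsto u).comp hxu
  have h4 := h2.add h3
  rw [zero_add] at h4
  refine h4.congr fun k => ?_
  rcases eq_or_ne (‖x k - xb‖) 0 with h | h
  · have hx : x k - xb = 0 := norm_eq_zero.mp h
    have hx' : x k = xb := sub_eq_zero.mp hx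
    simp [hx, hx', h]
  · rw [map_smul, smul_eq_mul]
    field_simp
    ring

/-- First-order growth under KKT and trivial critical cone. -/
lemma growth_aux (n l₁ l₂ : ℕ) (q : Fin (l₁ + l₂) → En n → ℝ) (xb : En n) (φ : En n → ℝ)
    (hq : ∀ i, ContDiff ℝ 2 (q i)) (hφ : ContDiff ℝ 2 φ)
    (hfeas : Feas n l₁ l₂ q xb) (hkkt : KKT n l₁ l₂ q xb φ)
    (hK : Kcone n l₁ l₂ q xb (-(fderiv ℝ φ xb)) = {0}) :
    ∃ c > (0:ℝ), ∃ γ₀ > (0:ℝ), ∀ x ∈ Gam n l₁ l₂ q, dist x xb ≤ γ₀ →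
      φ xb + c * ‖x - xb‖ ≤ φ x := by
  by_contra hcon
  push_neg at hcon
  have hseq : ∀ k : ℕ, ∃ x ∈ Gam n l₁ l₂ q, dist x xb ≤ 1 / (k + 1) ∧
      φ x < φ xb + (1 / (k + 1)) * ‖x - xb‖ := by
    intro k
    have hpos : (0:ℝ) < 1 / (k + 1) := by positivity
    obtain ⟨x, hx1, hx2, hx3⟩ := hcon (1 / (k + 1)) hpos (1 / (k + 1)) hpos
    exact ⟨x, hx1, hx2, hx3⟩
  choose x hxG hxd hxφ using hseq
  have hxne : ∀ k, x k ≠ xb := by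
    intro k h
    have := hxφ k
    rw [h] at this
    simp at this
  have htpos : ∀ k, (0:ℝ) < ‖x k - xb‖ := fun k =>
    norm_pos_iff.mpr (sub_ne_zero.mpr (hxne k))
  -- unit directions
  have hmem : ∀ k, (‖x k - xb‖)⁻¹ • (x k - xb) ∈ sphere (0 : En n) 1 := by
    intro k
    rw [mem_sphere_zero_iff_norm, norm_smul, norm_inv, norm_norm]
    exact inv_mul_cancel₀ (htpos k).ne'
  obtain ⟨u, humem, g, hgmono, hgtend⟩ :=
    (isCompact_sphere (0 : En n) 1).tendsto_subseq hmem
  have hunorm : ‖u‖ = 1 := mem_sphere_zero_iff_norm.mp humem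
  set y : ℕ → En n := fun k => x (g k) with hy
  have hyd : ∀ k, dist (y k) xb ≤ 1 / (k + 1) := by
    intro k
    refine (hxd (g k)).trans ?_
    have hk : k ≤ g k := hgmono.le_apply
    have : (k:ℝ) + 1 ≤ (g k : ℝ) + 1 := by
      exact_mod_cast add_le_add_left (Nat.cast_le.mpr hk) (1:ℝ)
    exact one_div_le_one_div_of_le (by positivity) this
  have hylim : Tendsto y atTop (𝓝 xb) := by
    rw [tendsto_iff_dist_tendsto_zero]
    refine squeeze_zero (fun k => dist_nonneg) hyd ?_
    exact tendsto_one_div_add_atTop_nhds_zero_nat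
  have hyu : Tendsto (fun k => (‖y k - xb‖)⁻¹ • (y k - xb)) atTop (𝓝 u) := hgtend
  have hytpos : ∀ k, (0:ℝ) < ‖y k - xb‖ := fun k => htpos (g k)
  -- u is in the tangent cone
  have hutan : u ∈ tangentConeAt ℝ (Gam n l₁ l₂ q) xb := by
    refine mem_tangentConeAt_of_seq atTop (fun k => (‖y k - xb‖)⁻¹) (fun k => y k - xb) ?_ ?_ ?_
    · simpa using hylim.sub_const xb
    · exact Eventually.of_forall fun k => by
        simpa [add_sub_cancel] using hxG (g k)
    · exact hyu
  -- difference quotient limits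
  have hφd : DifferentiableAt ℝ φ xb :=
    (hφ.differentiable (by norm_num)).differentiableAt
  have hφquot := quot_tendsto hφd hyu hylim
  -- Dφ u ≤ 0
  have hDφ_le : fderiv ℝ φ xb u ≤ 0 := by
    have hub : ∀ k, (φ (y k) - φ xb) / ‖y k - xb‖ ≤ 1 / ((g k : ℝ) + 1) := by
      intro k
      rw [div_le_iff₀ (hytpos k)]
      have := hxφ (g k)
      linarith
    have hlim0 : Tendsto (fun k => 1 / ((g k : ℝ) + 1)) atTop (𝓝 0) :=
      tendsto_one_div_add_atTop_nhds_zero_nat.comp hgmono.tendsto_atTop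
    exact le_of_tendsto_of_tendsto' hφquot hlim0 hub
  -- Dφ u ≥ 0 from KKT
  have hDφ_ge : 0 ≤ fderiv ℝ φ xb u := by
    obtain ⟨lam, hlamN, hsum⟩ := hkkt
    have happ : fderiv ℝ φ xb u + gradSum n l₁ l₂ q xb lam u = 0 := by
      have := congrArg (fun T : En n →L[ℝ] ℝ => T u) hsum
      simpa using this
    have hgs : gradSum n l₁ l₂ q xb lam u = ∑ i, lam i * fderiv ℝ (q i) xb u := by
      simp [gradSum]
    have hterm : ∀ i : Fin (l₁ + l₂), lam i * fderiv ℝ (q i) xb u ≤ 0 := by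
      intro i
      have hqd : DifferentiableAt ℝ (q i) xb :=
        ((hq i).differentiable (by norm_num)).differentiableAt
      have hqquot := quot_tendsto hqd hyu hylim
      rcases lt_or_ge (i : ℕ) l₁ with hi | hi
      · -- equality constraint: derivative in direction u is 0
        have hz : ∀ k : ℕ, (q i (y k) - q i xb) / ‖y k - xb‖ = 0 := by
          intro k
          rw [(hxG (g k) i).1 hi, (hfeas i).1 hi]
          simp
        have : Tendsto (fun k => (q i (y k) - q i xb) / ‖y k - xb‖) atTop (𝓝 0) := by
          simp only [hz]; exact tendsto_const_nhds
        have heq : fderiv ℝ (q i) xb u = 0 := tendsto_nhds_unique hqquot this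
        rw [heq, mul_zero]
      · rcases eq_or_ne (q i xb) 0 with hact | hact
        · -- active inequality: derivative ≤ 0, multiplier ≥ 0
          have hle : fderiv ℝ (q i) xb u ≤ 0 := by
            refine le_of_tendsto hqquot (Eventually.of_forall fun k => ?_)
            apply div_nonpos_of_nonpos_of_nonneg
            · have := (hxG (g k) i).2 hi
              linarith [hact]
            · exact (hytpos k).le
          exact mul_nonpos_of_nonneg_of_nonpos (hlamN i hi).1 hle
        · rw [(hlamN i hi).2 hact, zero_mul]
    have hsle : gradSum n l₁ l₂ q xb lam u ≤ 0 := by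
      rw [hgs]; exact Finset.sum_nonpos fun i _ => hterm i
    linarith
  have hDφ0 : fderiv ℝ φ xb u = 0 := le_antisymm hDφ_le hDφ_ge
  have huK : u ∈ Kcone n l₁ l₂ q xb (-(fderiv ℝ φ xb)) := by
    refine ⟨hutan, ?_⟩
    simp [hDφ0]
  rw [hK] at huK
  simp only [mem_singleton_iff] at huK
  rw [huK] at hunorm
  simp at hunorm

/-- if MSCQ, BEPP and KKT hold at x̄ and the critical cone is trivial,
then the localized argminimum mapping is constantly {x̄} near the zero tilt; in
particular x̄ is tilt-stable with every modulus κ > 0 (exact bound 0). -/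
theorem stmt15 (n l₁ l₂ : ℕ) (q : Fin (l₁ + l₂) → En n → ℝ) (xb : En n) (φ : En n → ℝ)
    (hq : ∀ i, ContDiff ℝ 2 (q i)) (hφ : ContDiff ℝ 2 φ)
    (hfeas : Feas n l₁ l₂ q xb)
    (hmscq : MSCQ n l₁ l₂ q xb) (hbepp : BEPP n l₁ l₂ q xb)
    (hkkt : KKT n l₁ l₂ q xb φ)
    (hK : Kcone n l₁ l₂ q xb (-(fderiv ℝ φ xb)) = {0}) :
    (∃ γ₀ > (0 : ℝ), ∀ γ : ℝ, 0 < γ → γ < γ₀ → ∃ V ∈ 𝓝 (0 : En n),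
      ∀ v ∈ V, ArgminSet n l₁ l₂ q xb φ γ v = {xb}) ∧
    ∀ κ > (0 : ℝ), TiltStableMod n l₁ l₂ q xb φ κ := by
  obtain ⟨c, hc, γ₀, hγ₀, hgrow⟩ := growth_aux n l₁ l₂ q xb φ hq hφ hfeas hkkt hK
  -- the key uniqueness statement
  have key : ∀ γ : ℝ, 0 < γ → γ ≤ γ₀ → ∀ v : En n, ‖v‖ < c / 2 →
      ArgminSet n l₁ l₂ q xb φ γ v = {xb} := by
    intro γ hγ hγle v hv
    have hxbA : xb ∈ ArgminSet n l₁ l₂ q xb φ γ v := by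
      refine ⟨hfeas, by simp [Metric.mem_closedBall, hγ.le], ?_⟩
      intro z hz hzball
      have hzd : dist z xb ≤ γ₀ := le_trans (Metric.mem_closedBall.mp hzball) hγle
      have hgz := hgrow z hz hzd
      have hinner : ⟪v, z⟫ - ⟪v, xb⟫ ≤ (c / 2) * ‖z - xb‖ := by
        have h1 : ⟪v, z⟫ - ⟪v, xb⟫ = ⟪v, z - xb⟫ := (inner_sub_right v z xb).symm
        rw [h1]
        calc ⟪v, z - xb⟫ ≤ ‖v‖ * ‖z - xb‖ := real_inner_le_norm v (z - xb)
          _ ≤ (c / 2) * ‖z - xb‖ :=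
            mul_le_mul_of_nonneg_right hv.le (norm_nonneg _)
      have hnn : (0:ℝ) ≤ ‖z - xb‖ := norm_nonneg _
      nlinarith
    ext z
    simp only [mem_singleton_iff]
    constructor
    · rintro ⟨hzG, hzball, hzmin⟩
      have h1 := hzmin xb hfeas (by simp [Metric.mem_closedBall, hγ.le])
      have hzd : dist z xb ≤ γ₀ := le_trans (Metric.mem_closedBall.mp hzball) hγle
      have hgz := hgrow z hzG hzd
      have hinner : ⟪v, z⟫ - ⟪v, xb⟫ ≤ (c / 2) * ‖z - xb‖ := by
        have he : ⟪v, z⟫ - ⟪v, xb⟫ = ⟪v, z - xb⟫ := (inner_sub_right v z xb).symm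
        rw [he]
        calc ⟪v, z - xb⟫ ≤ ‖v‖ * ‖z - xb‖ := real_inner_le_norm v (z - xb)
          _ ≤ (c / 2) * ‖z - xb‖ :=
            mul_le_mul_of_nonneg_right hv.le (norm_nonneg _)
      have hz0 : ‖z - xb‖ ≤ 0 := by nlinarith [norm_nonneg (z - xb)]
      have : z - xb = 0 := norm_le_zero_iff.mp hz0
      exact sub_eq_zero.mp this
    · rintro rfl
      exact hxbA
  constructor
  · refine ⟨γ₀, hγ₀, fun γ hγ hγlt => ⟨Metric.ball 0 (c / 2), Metric.ball_mem_nhds _ (by positivity), ?_⟩⟩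
    intro v hv
    exact key γ hγ hγlt.le v (by simpa [Metric.mem_ball, dist_zero_right] using hv)
  · intro κ hκ
    refine ⟨γ₀, hγ₀, c / 2, by positivity, fun _ => xb, rfl, ?_, ?_⟩
    · exact ((LipschitzWith.const (α := En n) xb).weaken zero_le).lipschitzOnWith
    · intro v hv
      exact key γ₀ hγ₀ le_rfl v (by simpa [Metric.mem_ball, dist_zero_right] using hv)
end

section
/- (Failure of tilt stability in Example 8.4.) For the NLP: minimize φ(x) = −x₁ + x₂²/2 subject to q₁(x) = x₁ − x₂⁴ + x₃² ≤ 0, q₂(x) = x₁ ≤ 0 in ℝ³, the point x̄ = (0,0,0) is not a tilt-stable local minimizer: for each u ≠ 0 the tilted problem minimize −x₁ + x₂²/2 − u x₂ over the feasible set has the two distinct local solutions (0, u, u²) and (0, u, −u²) in any ball around x̄, so the localized argminimum mapping is not single-valued near the zero tilt. -/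
open Metric Set Filter Topology
open scoped RealInnerProductSpace NNReal

/-- The feasible set of Example 8.4. -/
def Gam19 : Set (En 3) := {x | x 0 - x 1 ^ 4 + x 2 ^ 2 ≤ 0 ∧ x 0 ≤ 0}

/-- The cost function of Example 8.4. -/
noncomputable def phi19 (x : En 3) : ℝ := -x 0 + x 1 ^ 2 / 2

/-- The localized argminimum mapping of the tilted problems in Example 8.4. -/
def M19 (γ : ℝ) (v : En 3) : Set (En 3) :=
  {x | x ∈ Gam19 ∧ x ∈ Metric.closedBall (0 : En 3) γ ∧
    ∀ y ∈ Gam19, y ∈ Metric.closedBall (0 : En 3) γ →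
      phi19 x - @inner ℝ _ _ v x ≤ phi19 y - @inner ℝ _ _ v y}

/-- The point (a,b,c) ∈ ℝ³. -/
noncomputable def pt19 (a b c : ℝ) : En 3 := (WithLp.equiv 2 (Fin 3 → ℝ)).symm ![a, b, c]

lemma mem19 (γ u c : ℝ) (hc : c ^ 2 = u ^ 4)
    (hball : pt19 0 u c ∈ Metric.closedBall (0 : En 3) γ) :
    pt19 0 u c ∈ M19 γ (pt19 0 u 0) := by
  refine ⟨?_, hball, ?_⟩
  · constructor
    · simp [pt19, Gam19]; nlinarith
    · simp [pt19]
  · intro y hy hyb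
    have hy0 : y 0 ≤ 0 := hy.2
    simp only [phi19, pt19, PiLp.inner_apply, Fin.sum_univ_three, RCLike.inner_apply,
      starRingEnd_apply, star_trivial]
    simp only [WithLp.equiv_symm_apply, PiLp.toLp_apply, Matrix.cons_val_zero, Matrix.cons_val_one,
      Matrix.head_cons, Matrix.cons_val_two, Matrix.tail_cons]
    nlinarith [sq_nonneg (y 1 - u)]

/-- in Example 8.4, for every localization radius γ and every small
tilt (0,u,0) with u ≠ 0 the tilted problem has the two distinct local solutions
(0,u,±u²); hence x̄ = 0 is not a tilt-stable local minimizer. -/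
theorem stmt19 :
    (∀ γ > (0 : ℝ), ∃ ε > (0 : ℝ), ∀ u : ℝ, u ≠ 0 → |u| < ε →
      pt19 0 u (u ^ 2) ∈ M19 γ (pt19 0 u 0) ∧
      pt19 0 u (-(u ^ 2)) ∈ M19 γ (pt19 0 u 0) ∧
      pt19 0 u (u ^ 2) ≠ pt19 0 u (-(u ^ 2))) ∧
    ¬ (∃ K : ℝ≥0, ∃ γ > (0 : ℝ), ∃ δ > (0 : ℝ), ∃ m₀ : En 3 → En 3,
        m₀ 0 = 0 ∧ LipschitzOnWith K m₀ (Metric.ball (0 : En 3) δ) ∧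
        ∀ v ∈ Metric.ball (0 : En 3) δ, M19 γ v = {m₀ v}) := by
  have h1 : ∀ γ > (0 : ℝ), ∃ ε > (0 : ℝ), ∀ u : ℝ, u ≠ 0 → |u| < ε →
      pt19 0 u (u ^ 2) ∈ M19 γ (pt19 0 u 0) ∧
      pt19 0 u (-(u ^ 2)) ∈ M19 γ (pt19 0 u 0) ∧
      pt19 0 u (u ^ 2) ≠ pt19 0 u (-(u ^ 2)) := by
    intro γ hγ
    refine ⟨min 1 (γ / 2), by positivity, fun u hu hue => ?_⟩
    have hu1 : |u| < 1 := lt_of_lt_of_le hue (min_le_left _ _)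
    have hu2 : |u| < γ / 2 := lt_of_lt_of_le hue (min_le_right _ _)
    have hb : ∀ c : ℝ, c ^ 2 = u ^ 4 → pt19 0 u c ∈ Metric.closedBall (0 : En 3) γ := by
      intro c hc
      rw [Metric.mem_closedBall, dist_zero_right, EuclideanSpace.norm_eq]
      simp only [pt19, Fin.sum_univ_three, WithLp.equiv_symm_apply, PiLp.toLp_apply, Matrix.cons_val_zero,
        Matrix.cons_val_one, Matrix.head_cons, Matrix.cons_val_two, Matrix.tail_cons,
        Real.norm_eq_abs, sq_abs]
      have h : (0:ℝ) ^ 2 + u ^ 2 + c ^ 2 ≤ γ ^ 2 := by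
        rw [hc]
        have ha1 : u ^ 2 < 1 := by
          rw [← sq_abs]; nlinarith [abs_nonneg u]
        have ha2 : u ^ 2 < γ ^ 2 / 4 := by
          rw [← sq_abs]; nlinarith [abs_nonneg u]
        nlinarith [sq_nonneg u]
      exact (Real.sqrt_le_sqrt h).trans (by rw [Real.sqrt_sq hγ.le])
    refine ⟨mem19 γ u _ (by ring) (hb _ (by ring)), mem19 γ u _ (by ring) (hb _ (by ring)), ?_⟩
    intro h
    have h2 := congrArg (fun x : En 3 => x 2) h
    simp only [pt19, WithLp.equiv_symm_apply, PiLp.toLp_apply, Matrix.cons_val_two, Matrix.tail_cons,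
      Matrix.head_cons, Matrix.cons_val_one] at h2
    nlinarith [pow_pos (abs_pos.mpr hu) 2, sq_abs u]
  refine ⟨h1, ?_⟩
  rintro ⟨K, γ, hγ, δ, hδ, m₀, hm0, hlip, hM⟩
  obtain ⟨ε, hε, hε'⟩ := h1 γ hγ
  set u := min ε δ / 2 with hu_def
  have hu0 : 0 < u := by positivity
  have hlt : u < min ε δ := by
    rw [hu_def]; exact half_lt_self (lt_min hε hδ)
  have huε : |u| < ε := by
    rw [abs_of_pos hu0]; exact hlt.trans_le (min_le_left _ _)
  have huδ : |u| < δ := by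
    rw [abs_of_pos hu0]; exact hlt.trans_le (min_le_right _ _)
  have hvball : pt19 0 u 0 ∈ Metric.ball (0 : En 3) δ := by
    rw [Metric.mem_ball, dist_zero_right, EuclideanSpace.norm_eq]
    simp only [pt19, Fin.sum_univ_three, WithLp.equiv_symm_apply, PiLp.toLp_apply, Matrix.cons_val_zero,
      Matrix.cons_val_one, Matrix.head_cons, Matrix.cons_val_two, Matrix.tail_cons,
      Real.norm_eq_abs, sq_abs]
    calc Real.sqrt (0 ^ 2 + u ^ 2 + 0 ^ 2) = |u| := by
          rw [show (0:ℝ)^2 + u^2 + 0^2 = u^2 by ring, Real.sqrt_sq_eq_abs]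
    _ < δ := huδ
  obtain ⟨hA, hB, hne⟩ := hε' u hu0.ne' huε
  have hset := hM _ hvball
  rw [hset] at hA hB
  exact hne (hA.trans hB.symm)
end
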